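/- Let n ≥ 2 and let V be a complex vector space of dimension n+1. For every 3-dimensional subspace U ⊆ Λ^{n−1}V, the annihilator a_U = {v ∈ V : v ∧ u = 0 in ΛⁿV for all u ∈ U} is a linear subspace of V of dimension at most n−2. -/

import Mathlib

/-- The image of `Λᵏ V` in the exterior algebra of `V`: the span of `k`-fold products
`v₁ ∧ ⋯ ∧ v_k` of vectors of `V`. -/
noncomputable def wedgePow {V : Type*} [AddCommGroup V] [Module ℂ V] (k : ℕ) :
    Submodule ℂ (ExteriorAlgebra ℂ V) :=
  Submodule.span ℂ
    {z | ∃ f : Fin k → V, z = (List.ofFn fun i => ExteriorAlgebra.ι ℂ (f i)).prod}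

/-- The annihilator `a_U = {v ∈ V ∣ v ∧ u = 0 for all u ∈ U}` of a subspace `U` of the
exterior algebra, as a linear subspace of `V`. -/
def annih {V : Type*} [AddCommGroup V] [Module ℂ V]
    (U : Submodule ℂ (ExteriorAlgebra ℂ V)) : Submodule ℂ V where
  carrier := {v | ∀ u ∈ U, ExteriorAlgebra.ι ℂ v * u = 0}
  add_mem' := by
    intro a b ha hb u hu
    rw [map_add, add_mul, ha u hu, hb u hu, add_zero]
  zero_mem' := by
    intro u hu
    rw [map_zero, zero_mul]
  smul_mem' := by
    intro c v hv u hu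
    rw [map_smul, smul_mul_assoc, hv u hu, smul_zero]

namespace Stmt9Aux

open ExteriorAlgebra Module Finset

variable {V : Type*} [AddCommGroup V] [Module ℂ V]

noncomputable def fl (m : ℕ) (f : V [⋀^Fin m]→ₗ[ℂ] ℂ) : ExteriorAlgebra ℂ V →ₗ[ℂ] ℂ :=
  ExteriorAlgebra.liftAlternating (Function.update (fun i => (0 : V [⋀^Fin i]→ₗ[ℂ] ℂ)) m f)

lemma fl_apply (m : ℕ) (f : V [⋀^Fin m]→ₗ[ℂ] ℂ) (w : Fin m → V) :
    fl m f (ExteriorAlgebra.ιMulti ℂ m w) = f w := by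
  rw [fl, ExteriorAlgebra.liftAlternating_apply_ιMulti, Function.update_self]

variable {k : ℕ}

noncomputable def en (S : Finset (Fin (k + 2))) (m : ℕ) : Fin m → Fin (k + 2) :=
  if h : S.card = m then ⇑(S.orderEmbOfFin h) else fun _ => 0

lemma en_eq {m : ℕ} {S : Finset (Fin (k + 2))} (h : S.card = m) :
    en S m = ⇑(S.orderEmbOfFin h) := dif_pos h

lemma en_mem {m : ℕ} {S : Finset (Fin (k + 2))} (h : S.card = m) (i : Fin m) :
    en S m i ∈ S := by rw [en_eq h]; exact S.orderEmbOfFin_mem h i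

lemma en_inj {m : ℕ} {S : Finset (Fin (k + 2))} (h : S.card = m) :
    Function.Injective (en S m) := by rw [en_eq h]; exact (S.orderEmbOfFin h).injective

lemma en_surj {m : ℕ} {S : Finset (Fin (k + 2))} (h : S.card = m) {x : Fin (k + 2)}
    (hx : x ∈ S) : ∃ i, en S m i = x := by
  rw [en_eq h]
  have : x ∈ Set.range ⇑(S.orderEmbOfFin h) := by
    rw [Finset.range_orderEmbOfFin]; exact hx
  exact this

lemma det_comp_eq_zero (e : Basis (Fin (k + 2)) ℂ V) {τ : Fin (k + 2) → Fin (k + 2)}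
    (h : ¬ Function.Injective τ) : e.det (⇑e ∘ τ) = 0 := by
  rw [Function.not_injective_iff] at h
  obtain ⟨i, j, hij, hne⟩ := h
  exact AlternatingMap.map_eq_zero_of_eq _ _ (by simp [Function.comp, hij]) hne

lemma det_comp_ne_zero (e : Basis (Fin (k + 2)) ℂ V) {τ : Fin (k + 2) → Fin (k + 2)}
    (h : Function.Injective τ) : e.det (⇑e ∘ τ) ≠ 0 := by
  let π : Equiv.Perm (Fin (k + 2)) := Equiv.ofBijective τ (Finite.injective_iff_bijective.mp h)
  have hτ : τ = ⇑π := rfl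
  rw [hτ, AlternatingMap.map_perm, Basis.det_self]
  rcases Int.units_eq_one_or (Equiv.Perm.sign π) with hs | hs <;> rw [hs] <;>
    simp [Units.smul_def]

lemma compl_card {S : Finset (Fin (k + 2))} (hS : S.card = k) : Sᶜ.card = 2 := by
  rw [Finset.card_compl, hS, Fintype.card_fin]; omega

/-- if `T ≠ S` (both of card `k`) and `p, q ∈ Sᶜ`, the `(k+2)`-tuple
`(p, q, (enumeration of T))` has a repetition -/
lemma offdet (e : Basis (Fin (k + 2)) ℂ V) {S T : Finset (Fin (k + 2))}
    (hS : S.card = k) (hT : T.card = k) (hne : T ≠ S) {p q : Fin (k + 2)}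
    (hp : p ∈ Sᶜ) (hq : q ∈ Sᶜ) :
    e.det (⇑e ∘ Fin.cons p (Fin.cons q (en T k))) = 0 := by
  apply det_comp_eq_zero
  -- find x ∈ T \ S
  have hTS : ¬ T ⊆ S := by
    intro hsub
    exact hne (Finset.eq_of_subset_of_card_le hsub (by omega))
  obtain ⟨x, hxT, hxS⟩ := Finset.not_subset.mp hTS
  obtain ⟨r, hr⟩ := en_surj hT hxT
  set τ : Fin (k + 2) → Fin (k + 2) := Fin.cons p (Fin.cons q (en T k)) with hτ
  intro hinj
  by_cases hxp : x = p
  · have : τ r.succ.succ = τ 0 := by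
      rw [hτ]; simp [Fin.cons_succ, Fin.cons_zero, hr, hxp]
    exact (Fin.succ_ne_zero _) (hinj this)
  by_cases hxq : x = q
  · have : τ r.succ.succ = τ (Fin.succ 0) := by
      rw [hτ]; simp [Fin.cons_succ, Fin.cons_zero, hr, hxq]
    exact (Fin.succ_ne_zero _) (Fin.succ_injective _ (hinj this))
  · -- then p = q since Sᶜ has only two elements
    have hxSc : x ∈ Sᶜ := Finset.mem_compl.mpr hxS
    have hpq : p = q := by
      by_contra hpq
      have hsub : ({p, q, x} : Finset (Fin (k + 2))) ⊆ Sᶜ := by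
        intro z hz
        simp only [Finset.mem_insert, Finset.mem_singleton] at hz
        rcases hz with rfl | rfl | rfl <;> assumption
      have h3 : ({p, q, x} : Finset (Fin (k + 2))).card = 3 := by
        rw [Finset.card_insert_of_notMem (by simp [hpq, Ne.symm hxp]),
          Finset.card_insert_of_notMem (by simp [Ne.symm hxq])]
        simp
      have := Finset.card_le_card hsub
      rw [h3, compl_card hS] at this
      omega
    have : τ 0 = τ (Fin.succ 0) := by
      rw [hτ]; simp [Fin.cons_succ, Fin.cons_zero, hpq]
    exact (Fin.succ_ne_zero 0).symm (hinj this)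

lemma diagdet (e : Basis (Fin (k + 2)) ℂ V) {S : Finset (Fin (k + 2))}
    (hS : S.card = k) {p q : Fin (k + 2)}
    (hp : p ∈ Sᶜ) (hq : q ∈ Sᶜ) (hpq : p ≠ q) :
    e.det (⇑e ∘ Fin.cons p (Fin.cons q (en S k))) ≠ 0 := by
  apply det_comp_ne_zero
  have hqr : q ∉ Set.range (en S k) := by
    rintro ⟨i, rfl⟩
    exact (Finset.mem_compl.mp hq) (en_mem hS i)
  have hpr : p ∉ Set.range (Fin.cons q (en S k)) := by
    rw [Fin.range_cons]
    rintro (rfl | ⟨i, rfl⟩)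
    · exact hpq rfl
    · exact (Finset.mem_compl.mp hp) (en_mem hS ‹_›)
  rw [Fin.cons_injective_iff]
  exact ⟨hpr, by rw [Fin.cons_injective_iff]; exact ⟨hqr, en_inj hS⟩⟩

end Stmt9Aux

namespace Stmt9Aux
open ExteriorAlgebra Module Finset

variable {V : Type*} [AddCommGroup V] [Module ℂ V] {k : ℕ}

/-- the wedge of the basis vectors indexed by `S` (in increasing order) -/
noncomputable def omeg (e : Basis (Fin (k + 2)) ℂ V) (S : Finset (Fin (k + 2))) :
    ExteriorAlgebra ℂ V :=
  ExteriorAlgebra.ιMulti ℂ k (⇑e ∘ en S k)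

/-- the coefficient functional associated to `S`: contraction of the determinant with the
two basis vectors complementary to `S` -/
noncomputable def cSf (e : Basis (Fin (k + 2)) ℂ V) (S : Finset (Fin (k + 2))) :
    ExteriorAlgebra ℂ V →ₗ[ℂ] ℂ :=
  fl k ((e.det.curryLeft (e (en Sᶜ 2 0))).curryLeft (e (en Sᶜ 2 1)))

noncomputable def psiS (e : Basis (Fin (k + 2)) ℂ V) (x : V) :
    ExteriorAlgebra ℂ V →ₗ[ℂ] ℂ :=
  fl (k + 1) (e.det.curryLeft x)

lemma cS_apply (e : Basis (Fin (k + 2)) ℂ V) (a b : Fin (k + 2)) (σ : Fin k → Fin (k + 2)) :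
    fl k ((e.det.curryLeft (e a)).curryLeft (e b)) (ExteriorAlgebra.ιMulti ℂ k (⇑e ∘ σ)) =
      e.det (⇑e ∘ Fin.cons a (Fin.cons b σ)) := by
  rw [fl_apply, AlternatingMap.curryLeft_apply_apply, AlternatingMap.curryLeft_apply_apply]
  congr 1
  rw [Matrix.vecCons, Matrix.vecCons, Fin.comp_cons, Fin.comp_cons]

lemma cSf_apply (e : Basis (Fin (k + 2)) ℂ V) (S : Finset (Fin (k + 2)))
    (σ : Fin k → Fin (k + 2)) :
    cSf e S (ExteriorAlgebra.ιMulti ℂ k (⇑e ∘ σ)) =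
      e.det (⇑e ∘ Fin.cons (en Sᶜ 2 0) (Fin.cons (en Sᶜ 2 1) σ)) :=
  cS_apply e _ _ σ

lemma psiS_apply (e : Basis (Fin (k + 2)) ℂ V) (x : V) (w : Fin (k + 1) → V) :
    psiS e x (ExteriorAlgebra.ιMulti ℂ (k + 1) w) = e.det (Matrix.vecCons x w) := by
  rw [psiS, fl_apply, AlternatingMap.curryLeft_apply_apply]

lemma cSf_off (e : Basis (Fin (k + 2)) ℂ V) {S T : Finset (Fin (k + 2))}
    (hS : S.card = k) (hT : T.card = k) (hne : T ≠ S) :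
    cSf e S (omeg e T) = 0 := by
  rw [omeg, cSf_apply]
  exact offdet e hS hT hne (en_mem (compl_card hS) 0) (en_mem (compl_card hS) 1)

lemma cSf_diag (e : Basis (Fin (k + 2)) ℂ V) {S : Finset (Fin (k + 2))}
    (hS : S.card = k) : cSf e S (omeg e S) ≠ 0 := by
  rw [omeg, cSf_apply]
  exact diagdet e hS (en_mem (compl_card hS) 0) (en_mem (compl_card hS) 1)
    (fun h => by simpa using en_inj (compl_card hS) h)

/-- the "reconstruction" endomorphism of the exterior algebra -/
noncomputable def Lmap (e : Basis (Fin (k + 2)) ℂ V) :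
    ExteriorAlgebra ℂ V →ₗ[ℂ] ExteriorAlgebra ℂ V :=
  ∑ S ∈ Finset.powersetCard k (Finset.univ : Finset (Fin (k + 2))),
    ((cSf e S (omeg e S))⁻¹ • cSf e S).smulRight (omeg e S)

lemma Lmap_apply (e : Basis (Fin (k + 2)) ℂ V) (u : ExteriorAlgebra ℂ V) :
    Lmap e u = ∑ S ∈ Finset.powersetCard k (Finset.univ : Finset (Fin (k + 2))),
      ((cSf e S (omeg e S))⁻¹ * cSf e S u) • omeg e S := by
  rw [Lmap, LinearMap.sum_apply]
  refine Finset.sum_congr rfl fun S _ => ?_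
  rw [LinearMap.smulRight_apply, LinearMap.smul_apply, smul_eq_mul]

lemma Lmap_omeg (e : Basis (Fin (k + 2)) ℂ V) {T : Finset (Fin (k + 2))} (hT : T.card = k) :
    Lmap e (omeg e T) = omeg e T := by
  rw [Lmap_apply]
  rw [Finset.sum_eq_single T]
  · rw [inv_mul_cancel₀ (cSf_diag e hT), one_smul]
  · intro S hS hne
    rw [cSf_off e (Finset.mem_powersetCard_univ.mp hS) hT (Ne.symm hne), mul_zero, zero_smul]
  · intro h
    exact absurd (Finset.mem_powersetCard_univ.mpr hT) h

end Stmt9Aux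

namespace Stmt9Aux
open ExteriorAlgebra Module Finset

variable {V : Type*} [AddCommGroup V] [Module ℂ V] {k : ℕ}

lemma Lmap_wedge (e : Basis (Fin (k + 2)) ℂ V) (σ : Fin k → Fin (k + 2)) :
    Lmap e (ExteriorAlgebra.ιMulti ℂ k (⇑e ∘ σ)) = ExteriorAlgebra.ιMulti ℂ k (⇑e ∘ σ) := by
  by_cases hσ : Function.Injective σ
  · -- sort σ : σ = en T k ∘ π for a permutation π
    set T : Finset (Fin (k + 2)) := Finset.image σ Finset.univ with hTdef
    have hT : T.card = k := by
      rw [hTdef, Finset.card_image_of_injective _ hσ, Finset.card_univ, Fintype.card_fin]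
    have hmem : ∀ i, σ i ∈ T := fun i => Finset.mem_image.mpr ⟨i, Finset.mem_univ i, rfl⟩
    set g : Fin k → Fin k := fun i => (T.orderIsoOfFin hT).symm ⟨σ i, hmem i⟩ with hg
    have hginj : Function.Injective g := by
      intro i j hij
      have h2 : ((T.orderIsoOfFin hT) (g i) : Fin (k + 2))
          = ((T.orderIsoOfFin hT) (g j) : Fin (k + 2)) := by rw [hij]
      rw [hg] at h2
      simp only [OrderIso.apply_symm_apply] at h2
      exact hσ h2
    let π : Equiv.Perm (Fin k) := Equiv.ofBijective g (Finite.injective_iff_bijective.mp hginj)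
    have hcomp : ⇑e ∘ σ = (⇑e ∘ en T k) ∘ ⇑π := by
      funext i
      have : en T k (g i) = σ i := by
        rw [en_eq hT, ← Finset.coe_orderIsoOfFin_apply, hg, OrderIso.apply_symm_apply]
      simp [Function.comp, π, Equiv.ofBijective_apply, this]
    rw [hcomp, AlternatingMap.map_perm]
    have : Lmap e ((Equiv.Perm.sign π) • ExteriorAlgebra.ιMulti ℂ k (⇑e ∘ en T k)) =
        (Equiv.Perm.sign π) • Lmap e (ExteriorAlgebra.ιMulti ℂ k (⇑e ∘ en T k)) := by
      rw [Units.smul_def, Units.smul_def, map_zsmul]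
    rw [this]
    congr 1
    exact Lmap_omeg e hT
  · -- `σ` has a repetition: the wedge is 0
    rw [Function.not_injective_iff] at hσ
    obtain ⟨i, j, hij, hne⟩ := hσ
    have : ExteriorAlgebra.ιMulti ℂ k (⇑e ∘ σ) = 0 :=
      AlternatingMap.map_eq_zero_of_eq _ _ (by simp [Function.comp, hij]) hne
    rw [this, map_zero]

lemma recon (e : Basis (Fin (k + 2)) ℂ V) {u : ExteriorAlgebra ℂ V} (hu : u ∈ wedgePow k) :
    Lmap e u = u := by
  have hle : wedgePow k ≤ LinearMap.eqLocus (Lmap e) (LinearMap.id) := by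
    rw [wedgePow, Submodule.span_le]
    rintro z ⟨f, rfl⟩
    rw [SetLike.mem_coe, LinearMap.mem_eqLocus]
    show Lmap e ((List.ofFn fun i => ExteriorAlgebra.ι ℂ (f i)).prod)
      = (List.ofFn fun i => ExteriorAlgebra.ι ℂ (f i)).prod
    rw [← ExteriorAlgebra.ιMulti_apply]
    have hf : f = fun i => ∑ j, e.repr (f i) j • e j := by
      funext i; exact (e.sum_repr (f i)).symm
    rw [show (ExteriorAlgebra.ιMulti ℂ k) f
        = (ExteriorAlgebra.ιMulti ℂ k).toMultilinearMap f from rfl]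
    conv_lhs => rw [hf]
    conv_rhs => rw [hf]
    rw [MultilinearMap.map_sum]
    rw [map_sum]
    refine Finset.sum_congr rfl fun r _ => ?_
    rw [MultilinearMap.map_smul_univ]
    rw [map_smul]
    congr 1
    exact Lmap_wedge e r
  exact hle hu

end Stmt9Aux

namespace Stmt9Aux
open ExteriorAlgebra Module Finset

variable {V : Type*} [AddCommGroup V] [Module ℂ V] {k : ℕ}

lemma eta_mul_omeg (e : Basis (Fin (k + 2)) ℂ V) (y i0 : Fin (k + 2))
    (T : Finset (Fin (k + 2))) :
    psiS e (e y) (ExteriorAlgebra.ι ℂ (e i0) * omeg e T) =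
      e.det (⇑e ∘ Fin.cons y (Fin.cons i0 (en T k))) := by
  have hmul : ExteriorAlgebra.ιMulti ℂ (k + 1) (⇑e ∘ Fin.cons i0 (en T k))
      = ExteriorAlgebra.ι ℂ (e i0) * omeg e T := by
    rw [ExteriorAlgebra.ιMulti_succ_apply, omeg]
    congr 1
  rw [← hmul, psiS_apply]
  congr 1
  funext j
  refine Fin.cases ?_ (fun r => ?_) j <;>
    simp [Matrix.vecCons, Fin.cons_succ, Fin.cons_zero, Function.comp]

lemma kill (e : Basis (Fin (k + 2)) ℂ V) {S : Finset (Fin (k + 2))} (hS : S.card = k)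
    {u : ExteriorAlgebra ℂ V} (hu : u ∈ wedgePow k) {i0 : Fin (k + 2)} (hi0 : i0 ∉ S)
    (hann : ExteriorAlgebra.ι ℂ (e i0) * u = 0) : cSf e S u = 0 := by
  have hi0c : i0 ∈ Sᶜ := Finset.mem_compl.mpr hi0
  obtain ⟨a, b, hab, hSc⟩ := Finset.card_eq_two.mp (compl_card hS)
  have hi0ab : i0 = a ∨ i0 = b := by
    have := hi0c; rw [hSc] at this; simpa using this
  obtain ⟨y, hy, hyne⟩ : ∃ y, y ∈ Sᶜ ∧ y ≠ i0 := by
    rcases hi0ab with rfl | rfl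
    · exact ⟨b, by rw [hSc]; simp, Ne.symm hab⟩
    · exact ⟨a, by rw [hSc]; simp, hab⟩
  have h0 : psiS e (e y) (ExteriorAlgebra.ι ℂ (e i0) * u) = 0 := by rw [hann, map_zero]
  rw [← recon e hu, Lmap_apply, Finset.mul_sum] at h0
  simp only [mul_smul_comm, map_sum, map_smul] at h0
  rw [Finset.sum_eq_single S] at h0
  · rw [eta_mul_omeg] at h0
    have hdet : e.det (⇑e ∘ Fin.cons y (Fin.cons i0 (en S k))) ≠ 0 :=
      diagdet e hS hy hi0c hyne
    have := mul_eq_zero.mp (by rwa [smul_eq_mul] at h0)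
    rcases this with h | h
    · rcases mul_eq_zero.mp h with h' | h'
      · exact absurd h' (inv_ne_zero (cSf_diag e hS))
      · exact h'
    · exact absurd h hdet
  · intro T hT hne
    rw [eta_mul_omeg, offdet e hS (Finset.mem_powersetCard_univ.mp hT) hne hy hi0c, smul_zero]
  · intro h
    exact absurd (Finset.mem_powersetCard_univ.mpr hS) h

lemma key (e : Basis (Fin (k + 2)) ℂ V) {u : ExteriorAlgebra ℂ V} (hu : u ∈ wedgePow k)
    (hann : ∀ i : Fin k, ExteriorAlgebra.ι ℂ (e (Fin.castAdd 2 i)) * u = 0) :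
    u ∈ Submodule.span ℂ {ExteriorAlgebra.ιMulti ℂ k (fun i => e (Fin.castAdd 2 i))} := by
  classical
  set S0 : Finset (Fin (k + 2)) := Finset.image (Fin.castAdd 2) Finset.univ with hS0def
  have hinj : Function.Injective (Fin.castAdd (n := k) 2) :=
    (Fin.strictMono_castAdd 2).injective
  have hS0 : S0.card = k := by
    rw [hS0def, Finset.card_image_of_injective _ hinj, Finset.card_univ, Fintype.card_fin]
  have hen : en S0 k = fun i => Fin.castAdd 2 i := by
    rw [en_eq hS0]
    exact (Finset.orderEmbOfFin_unique hS0
      (fun i => Finset.mem_image.mpr ⟨i, Finset.mem_univ i, rfl⟩)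
      (Fin.strictMono_castAdd 2)).symm
  have homeg : omeg e S0 = ExteriorAlgebra.ιMulti ℂ k (fun i => e (Fin.castAdd 2 i)) := by
    rw [omeg, hen]; rfl
  have hrec := (recon e hu).symm
  rw [Lmap_apply, Finset.sum_eq_single S0] at hrec
  · rw [hrec, homeg]
    exact Submodule.mem_span_singleton.mpr ⟨_, rfl⟩
  · intro T hT hne
    have hT' : T.card = k := Finset.mem_powersetCard_univ.mp hT
    obtain ⟨i, hi⟩ : ∃ i : Fin k, Fin.castAdd 2 i ∉ T := by
      by_contra hc
      push_neg at hc
      have hsub : S0 ⊆ T := by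
        intro z hz
        rw [hS0def, Finset.mem_image] at hz
        obtain ⟨i, _, rfl⟩ := hz
        exact hc i
      exact hne (Finset.eq_of_subset_of_card_le hsub (by omega)).symm
    rw [kill e hT' hu hi (hann i), mul_zero, zero_smul]
  · intro h
    exact absurd (Finset.mem_powersetCard_univ.mpr hS0) h

end Stmt9Aux

namespace Stmt9Aux
open ExteriorAlgebra Module Finset

variable {V : Type*} [AddCommGroup V] [Module ℂ V]

lemma exists_basis_ext [FiniteDimensional ℂ V] {k : ℕ}
    (hdim : Module.finrank ℂ V = k + 2) {v : Fin k → V} (hv : LinearIndependent ℂ v) :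
    ∃ e : Basis (Fin (k + 2)) ℂ V, ∀ i, e (Fin.castAdd 2 i) = v i := by
  classical
  set s : Set V := Set.range v with hsdef
  have hs : LinearIndepOn ℂ id s := (linearIndepOn_id_range_iff hv.injective).mpr hv
  let t : Set V := hs.extend (Set.subset_univ s)
  let bext : Basis ↑t ℂ V := Basis.extend hs
  have hst : s ⊆ t := hs.subset_extend _
  haveI : Fintype ↑t := FiniteDimensional.fintypeBasisIndex bext
  have hcardt : Nat.card ↑t = k + 2 := by
    rw [Nat.card_eq_fintype_card, ← Module.finrank_eq_card_basis bext, hdim]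
  have hcards : Nat.card ↑s = k := by
    rw [hsdef, Nat.card_range_of_injective hv.injective, Nat.card_eq_fintype_card,
      Fintype.card_fin]
  have hd : Nat.card ↑(t \ s : Set V) = 2 := by
    have := Nat.card_congr (Equiv.Set.sumDiffSubset hst)
    rw [Nat.card_sum, hcards] at this
    omega
  haveI : Fintype ↑(t \ s : Set V) :=
    (Set.Finite.subset (Set.toFinite t) Set.diff_subset).fintype
  let g1 : Fin k ≃ ↑s := Equiv.ofInjective v hv.injective
  let g2 : ↑(t \ s : Set V) ≃ Fin 2 :=
    Fintype.equivFinOfCardEq (by rw [← Nat.card_eq_fintype_card]; exact hd)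
  let E : Fin (k + 2) ≃ ↑t :=
    (finSumFinEquiv.symm.trans (g1.sumCongr g2.symm)).trans (Equiv.Set.sumDiffSubset hst)
  have hE : ∀ i : Fin k, (E (Fin.castAdd 2 i) : V) = v i := by
    intro i
    show ((Equiv.Set.sumDiffSubset hst)
      ((g1.sumCongr g2.symm) (finSumFinEquiv.symm (Fin.castAdd 2 i))) : V) = v i
    rw [finSumFinEquiv_symm_apply_castAdd]
    show ((Equiv.Set.sumDiffSubset hst) (Sum.inl (g1 i)) : V) = v i
    rw [Equiv.Set.sumDiffSubset_apply_inl]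
    rfl
  refine ⟨bext.reindex E.symm, fun i => ?_⟩
  rw [Basis.reindex_apply, Equiv.symm_symm]
  rw [Basis.extend_apply_self]
  exact hE i

end Stmt9Aux

/-- for `n ≥ 2`, `dim V = n+1` and a 3-dimensional subspace
`U ⊆ Λ^{n-1} V`, the annihilator `a_U = {v ∈ V ∣ v ∧ u = 0 in ΛⁿV for all u ∈ U}` is a
linear subspace of `V` of dimension at most `n - 2`. -/
theorem stmt9 {V : Type*} [AddCommGroup V] [Module ℂ V] [FiniteDimensional ℂ V]
    (n : ℕ) (hn : 2 ≤ n) (hdimV : Module.finrank ℂ V = n + 1)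
    (U : Submodule ℂ (ExteriorAlgebra ℂ V))
    (hU : U ≤ wedgePow (n - 1))
    (hdim : Module.finrank ℂ U = 3) :
    Module.finrank ℂ (annih U) ≤ n - 2 := by
  classical
  by_contra hcon
  push_neg at hcon
  set k := n - 1 with hk
  have hkd : Module.finrank ℂ V = k + 2 := by rw [hdimV]; omega
  have hkle : k ≤ Module.finrank ℂ (annih U) := by omega
  let bW := Module.finBasis ℂ (annih U)
  let w : Fin k → V := fun i => ((bW (Fin.castLE hkle i)) : V)
  have hw : LinearIndependent ℂ w :=
    (bW.linearIndependent.comp (Fin.castLE hkle) (Fin.castLE_injective hkle)).map'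
      (annih U).subtype (Submodule.ker_subtype _)
  obtain ⟨e, he⟩ := Stmt9Aux.exists_basis_ext hkd hw
  set ω := ExteriorAlgebra.ιMulti ℂ k (fun i => e (Fin.castAdd 2 i)) with hω
  have hUle : U ≤ Submodule.span ℂ {ω} := by
    intro u hu
    apply Stmt9Aux.key e (hU hu)
    intro i
    rw [he i]
    exact (bW (Fin.castLE hkle i)).2 u hu
  haveI := FiniteDimensional.span_singleton ℂ ω
  have h1 : Module.finrank ℂ U ≤ Module.finrank ℂ (Submodule.span ℂ {ω}) :=
    Submodule.finrank_mono hUle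
  have h2 : Module.finrank ℂ (Submodule.span ℂ {ω}) ≤ 1 := by
    by_cases hz : ω = 0
    · rw [hz, Submodule.span_zero_singleton, finrank_bot]; omega
    · rw [finrank_span_singleton hz]
  rw [hdim] at h1
  omega
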